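/- Fix constants A₁ > 0, C > 0 and R ≥ 1, and suppose 0 < δ < 1/(2eC). Then Q_k = (2δC)^k / k! · A₁ · exp((k+R)·ln(k+R)) tends to 0 as k → ∞. -/

import Mathlib

open Real Filter

/-- remainder estimate, borderline case ζ = 0, δ < 1/(2eC): Q_k → 0. -/
theorem remainder_tendsto_zero_borderline
    (A₁ C δ R : ℝ) (hA₁ : 0 < A₁) (hC : 0 < C) (hR : 1 ≤ R)
    (hδ0 : 0 < δ) (hδ : δ < 1 / (2 * Real.exp 1 * C)) :
    Filter.Tendsto
      (fun k : ℕ => (2 * δ * C) ^ k / (Nat.factorial k : ℝ) * A₁ *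
        Real.exp (((k : ℝ) + R) * Real.log ((k : ℝ) + R)))
      Filter.atTop (nhds 0) := by
  set q : ℝ := 2 * δ * C * Real.exp 1 with hqdef
  have hq0 : 0 < q := by positivity
  have hq1 : q < 1 := by
    have h2eC : 0 < 2 * Real.exp 1 * C := by positivity
    have h := (lt_div_iff₀ h2eC).mp hδ
    rw [hqdef]; nlinarith [h]
  set m : ℕ := ⌈R⌉₊ with hm
  set b : ℝ := A₁ * Real.exp R * (1 + R) ^ R with hb
  have hb0 : 0 < b := by
    have : (0:ℝ) < (1 + R) ^ R := Real.rpow_pos_of_pos (by linarith) R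
    positivity
  -- main pointwise bound for k ≥ 1
  have key : ∀ k : ℕ, 1 ≤ k →
      (2 * δ * C) ^ k / (Nat.factorial k : ℝ) * A₁ *
        Real.exp (((k : ℝ) + R) * Real.log ((k : ℝ) + R))
        ≤ b * ((k : ℝ) ^ m * q ^ k) := by
    intro k hk
    have hk0 : (0:ℝ) < k := by exact_mod_cast hk
    have hkR : (0:ℝ) < (k : ℝ) + R := by linarith
    -- exp((k+R) log(k+R)) = (k+R)^(k+R) as rpow
    have hexp : Real.exp (((k : ℝ) + R) * Real.log ((k : ℝ) + R))
        = ((k : ℝ) + R) ^ (k : ℕ) * ((k : ℝ) + R) ^ R := by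
      rw [show Real.exp (((k:ℝ)+R) * Real.log ((k:ℝ)+R)) = ((k:ℝ)+R) ^ (((k:ℝ))+R) from
        by rw [Real.rpow_def_of_pos hkR, mul_comm], Real.rpow_add hkR, Real.rpow_natCast]
    -- (k+R)^k ≤ k^k * exp R
    have hB : ((k : ℝ) + R) ^ (k : ℕ) ≤ (k : ℝ) ^ (k : ℕ) * Real.exp R := by
      have h1 : (k : ℝ) + R ≤ (k : ℝ) * Real.exp (R / k) := by
        have := Real.add_one_le_exp (R / k)
        have h2 : (k : ℝ) * (R / k + 1) ≤ (k : ℝ) * Real.exp (R / k) :=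
          mul_le_mul_of_nonneg_left this hk0.le
        have h3 : (k : ℝ) * (R / k + 1) = k + R := by field_simp; ring
        linarith [h3 ▸ h2]
      calc ((k : ℝ) + R) ^ (k : ℕ) ≤ ((k : ℝ) * Real.exp (R / k)) ^ (k : ℕ) := by
            apply pow_le_pow_left₀ hkR.le h1
        _ = (k : ℝ) ^ (k : ℕ) * Real.exp R := by
            rw [mul_pow, ← Real.exp_nat_mul]
            congr 2
            field_simp
    -- (k+R)^R ≤ (1+R)^R * k^m
    have hC2 : ((k : ℝ) + R) ^ R ≤ (1 + R) ^ R * (k : ℝ) ^ m := by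
      have hk1 : (1:ℝ) ≤ (k:ℝ) := by exact_mod_cast hk
      have hkR1 : (k : ℝ) + R ≤ (1 + R) * k := by nlinarith [mul_nonneg (by linarith : (0:ℝ) ≤ R) (by linarith : (0:ℝ) ≤ (k:ℝ) - 1)]
      have h1 : ((k : ℝ) + R) ^ R ≤ ((1 + R) * k) ^ R :=
        Real.rpow_le_rpow hkR.le hkR1 (by linarith)
      have h2 : ((1 + R) * (k:ℝ)) ^ R = (1 + R) ^ R * (k : ℝ) ^ (R : ℝ) :=
        Real.mul_rpow (by linarith) hk0.le
      have h3 : (k : ℝ) ^ (R : ℝ) ≤ (k : ℝ) ^ (m : ℝ) :=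
        Real.rpow_le_rpow_of_exponent_le (by exact_mod_cast hk) (Nat.le_ceil R)
      have h4 : (k : ℝ) ^ (m : ℝ) = (k : ℝ) ^ m := Real.rpow_natCast _ m
      calc ((k : ℝ) + R) ^ R ≤ (1 + R) ^ R * (k : ℝ) ^ (R : ℝ) := h2 ▸ h1
        _ ≤ (1 + R) ^ R * (k : ℝ) ^ m := by
            rw [← h4]
            exact mul_le_mul_of_nonneg_left h3 (Real.rpow_nonneg (by linarith) R)
    -- (2δC)^k / k! ≤ q^k / k^k
    have hD : (2 * δ * C) ^ k / (Nat.factorial k : ℝ) ≤ q ^ k / (k : ℝ) ^ (k : ℕ) := by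
      have hfac : (0:ℝ) < (Nat.factorial k : ℝ) := by exact_mod_cast k.factorial_pos
      have hkk : (0:ℝ) < (k : ℝ) ^ (k : ℕ) := pow_pos hk0 k
      rw [div_le_div_iff₀ hfac hkk]
      have hkey : (k : ℝ) ^ (k : ℕ) ≤ Real.exp 1 ^ k * (Nat.factorial k : ℝ) := by
        have := Real.pow_div_factorial_le_exp (x := (k:ℝ)) hk0.le k
        rw [div_le_iff₀ hfac] at this
        calc (k : ℝ) ^ (k : ℕ) ≤ Real.exp (k : ℝ) * (Nat.factorial k : ℝ) := this
          _ = Real.exp 1 ^ k * (Nat.factorial k : ℝ) := by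
              rw [← Real.exp_nat_mul]; norm_num
      have hq : q ^ k = (2 * δ * C) ^ k * Real.exp 1 ^ k := by
        rw [hqdef, mul_pow]
      rw [hq]
      have h2δC : (0:ℝ) ≤ (2 * δ * C) ^ k := by positivity
      calc (2 * δ * C) ^ k * (k : ℝ) ^ (k : ℕ)
          ≤ (2 * δ * C) ^ k * (Real.exp 1 ^ k * (Nat.factorial k : ℝ)) :=
            mul_le_mul_of_nonneg_left hkey h2δC
        _ = (2 * δ * C) ^ k * Real.exp 1 ^ k * (Nat.factorial k : ℝ) := by ring
    -- combine
    have hkk : (0:ℝ) < (k : ℝ) ^ (k : ℕ) := pow_pos hk0 k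
    have hexpval : Real.exp (((k : ℝ) + R) * Real.log ((k : ℝ) + R))
        ≤ (k : ℝ) ^ (k : ℕ) * Real.exp R * ((1 + R) ^ R * (k : ℝ) ^ m) := by
      rw [hexp]
      exact mul_le_mul hB hC2 (Real.rpow_nonneg hkR.le R)
        (by positivity)
    have hnn : (0:ℝ) ≤ (2 * δ * C) ^ k / (Nat.factorial k : ℝ) * A₁ := by positivity
    calc (2 * δ * C) ^ k / (Nat.factorial k : ℝ) * A₁ *
          Real.exp (((k : ℝ) + R) * Real.log ((k : ℝ) + R))
        ≤ (2 * δ * C) ^ k / (Nat.factorial k : ℝ) * A₁ *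
          ((k : ℝ) ^ (k : ℕ) * Real.exp R * ((1 + R) ^ R * (k : ℝ) ^ m)) :=
          mul_le_mul_of_nonneg_left hexpval hnn
      _ ≤ q ^ k / (k : ℝ) ^ (k : ℕ) * A₁ *
          ((k : ℝ) ^ (k : ℕ) * Real.exp R * ((1 + R) ^ R * (k : ℝ) ^ m)) := by
          apply mul_le_mul_of_nonneg_right
          · exact mul_le_mul_of_nonneg_right hD hA₁.le
          · positivity
      _ = b * ((k : ℝ) ^ m * q ^ k) := by
          rw [hb]; field_simp
  -- limit of the bound
  have hlim : Filter.Tendsto (fun k : ℕ => b * ((k : ℝ) ^ m * q ^ k)) atTop (nhds 0) := by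
    have := tendsto_pow_const_mul_const_pow_of_lt_one m hq0.le hq1
    simpa using this.const_mul b
  apply squeeze_zero' (g := fun k : ℕ => b * ((k : ℝ) ^ m * q ^ k)) ?_ ?_ hlim
  · filter_upwards [eventually_ge_atTop 1] with k hk
    have hkR : (0:ℝ) < (k : ℝ) + R := by
      have : (0:ℝ) < (k:ℝ) := by exact_mod_cast hk
      linarith
    positivity
  · filter_upwards [eventually_ge_atTop 1] with k hk
    exact key k hk
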